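/- Let G be a chordal graph, S a minimal separator in G, and D a component of G − S full to S. If there exist two distinct maximal cliques Ω₁, Ω₂ of G with S ⊊ Ωᵢ ⊆ N[D] for i = 1, 2, then there exists a minimal separator S' in G with S ⊊ S' ⊆ N[D]. -/

import Mathlib

open SimpleGraph

variable {V : Type*}

/-- `D` is (the vertex set of) a connected component of `G - S`. -/
def IsCompOf (G : SimpleGraph V) (S D : Set V) : Prop :=
  D.Nonempty ∧ Disjoint D S ∧ (G.induce D).Connected ∧
    ∀ v ∈ D, ∀ w : V, G.Adj v w → w ∉ S → w ∈ D

/-- The open neighborhood `N(D)` of a vertex set `D`. -/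
def nbhd (G : SimpleGraph V) (D : Set V) : Set V :=
  {v | v ∉ D ∧ ∃ d ∈ D, G.Adj v d}

/-- The closed neighborhood `N[D]` of a vertex set `D`. -/
def closedNbhd (G : SimpleGraph V) (D : Set V) : Set V :=
  D ∪ nbhd G D

/-- `D` is full to `S`: every vertex of `S` has a neighbor in `D`. -/
def FullTo (G : SimpleGraph V) (S D : Set V) : Prop :=
  ∀ s ∈ S, ∃ d ∈ D, G.Adj s d

/-- `S` is a minimal separator: `G - S` has at least two components full to `S`. -/
def IsMinSep (G : SimpleGraph V) (S : Set V) : Prop :=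
  ∃ D₁ D₂ : Set V, IsCompOf G S D₁ ∧ IsCompOf G S D₂ ∧ D₁ ≠ D₂ ∧
    FullTo G S D₁ ∧ FullTo G S D₂

/-- A graph is chordal if it has no induced cycle of length at least 4. -/
def IsChordal (G : SimpleGraph V) : Prop :=
  ∀ n : ℕ, 4 ≤ n → IsEmpty (cycleGraph n ↪g G)

/-- `Ω` is a maximal clique of `G`. -/
def MaxClique (G : SimpleGraph V) (Ω : Set V) : Prop :=
  G.IsClique Ω ∧ ∀ T : Set V, G.IsClique T → Ω ⊆ T → T = Ω

/-- reachability from `a` avoiding `T`. -/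
def AComp (G : SimpleGraph V) (T : Set V) (a : V) : Set V :=
  {v | ∃ p : G.Walk a v, ∀ x ∈ p.support, x ∉ T}

/-- `T` separates `a` from `b`. -/
def Seps (G : SimpleGraph V) (T : Set V) (a b : V) : Prop :=
  ∀ p : G.Walk a b, ∃ x ∈ p.support, x ∈ T

lemma aComp_self {G : SimpleGraph V} {T : Set V} {a : V} (h : a ∉ T) : a ∈ AComp G T a :=
  ⟨Walk.nil, by simp [h]⟩

lemma aComp_not_mem {G : SimpleGraph V} {T : Set V} {a v : V} (h : v ∈ AComp G T a) : v ∉ T := by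
  obtain ⟨p, hp⟩ := h
  exact hp v p.end_mem_support

lemma mem_aComp_of_mem_support {G : SimpleGraph V} {T : Set V} {a v : V}
    {p : G.Walk a v} (hp : ∀ x ∈ p.support, x ∉ T) {x : V} (hx : x ∈ p.support) :
    x ∈ AComp G T a := by
  classical
  exact ⟨p.takeUntil x hx, fun y hy => hp y (p.support_takeUntil_subset hx hy)⟩

lemma reach_induce {G : SimpleGraph V} {A : Set V} :
    ∀ {u v : V} (p : G.Walk u v), (∀ x ∈ p.support, x ∈ A) →
    ∀ (hu : u ∈ A) (hv : v ∈ A), (G.induce A).Reachable ⟨u, hu⟩ ⟨v, hv⟩ := by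
  intro u v p
  induction p with
  | nil => intro _ hu hv; exact Reachable.refl _
  | @cons u' v' w' hadj q ih =>
    intro h hu hv
    have hw : v' ∈ A := h v' (by simp)
    refine Reachable.trans ?_ (ih (fun x hx => h x (by simp [hx])) hw hv)
    exact Adj.reachable (by simpa using hadj)

lemma isCompOf_aComp (G : SimpleGraph V) {T : Set V} {a : V} (ha : a ∉ T) :
    IsCompOf G T (AComp G T a) := by
  classical
  refine ⟨⟨a, aComp_self ha⟩, ?_, ?_, ?_⟩
  · rw [Set.disjoint_left]
    exact fun v hv => aComp_not_mem hv
  · haveI : Nonempty ↑(AComp G T a) := ⟨⟨a, aComp_self ha⟩⟩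
    refine Connected.mk ?_
    rintro ⟨u, pu, hpu⟩ ⟨v, pv, hpv⟩
    have hsupp : ∀ x ∈ (pu.reverse.append pv).support, x ∈ AComp G T a := by
      intro x hx
      rw [Walk.support_append] at hx
      rcases List.mem_append.mp hx with hx | hx
      · rw [Walk.support_reverse] at hx
        exact mem_aComp_of_mem_support hpu (List.mem_reverse.mp hx)
      · exact mem_aComp_of_mem_support hpv (List.mem_of_mem_tail hx)
    exact reach_induce (pu.reverse.append pv) hsupp _ _
  · rintro v ⟨p, hp⟩ w hadj hw
    refine ⟨p.concat hadj, ?_⟩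
    intro x hx
    rw [Walk.support_concat] at hx
    rcases List.mem_append.mp hx with hx | hx
    · exact hp x hx
    · simp only [List.mem_singleton] at hx
      exact hx ▸ hw

lemma aComp_full {G : SimpleGraph V} {T : Set V} {a b : V} (ha : a ∉ T)
    (hsep : Seps G T a b) (hmin : ∀ s ∈ T, ¬ Seps G (T \ {s}) a b) :
    FullTo G T (AComp G T a) := by
  classical
  intro s hs
  have h1 := hmin s hs
  rw [Seps] at h1
  push_neg at h1
  obtain ⟨p, hp⟩ := h1
  obtain ⟨x, hxs, hxT⟩ := hsep p
  have hxeq : x = s := by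
    by_contra hne
    exact hp x hxs ⟨hxT, hne⟩
  subst hxeq
  set q := p.takeUntil x hxs with hq
  have hqsupp : ∀ y ∈ q.support, y ∉ T \ {x} := fun y hy =>
    hp y (p.support_takeUntil_subset hxs hy)
  have hcount : q.support.count x = 1 := p.count_support_takeUntil_eq_one hxs
  have hax : x ≠ a := fun h => ha (h ▸ hxT)
  obtain ⟨w, hadj, p', hp'⟩ := Walk.exists_eq_cons_of_ne hax q.reverse
  have hsupp_rev : q.reverse.support = x :: p'.support := by rw [hp', Walk.support_cons]
  have hxnot : x ∉ p'.support := by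
    have h2 : q.reverse.support.count x = 1 := by
      rw [Walk.support_reverse, List.count_reverse]; exact hcount
    rw [hsupp_rev, List.count_cons_self] at h2
    simpa using List.count_eq_zero.mp (by omega)
  have hp'T : ∀ y ∈ p'.support, y ∉ T := by
    intro y hy
    have hyq : y ∈ q.support := by
      rw [← List.mem_reverse, ← Walk.support_reverse, hsupp_rev]
      exact List.mem_cons_of_mem _ hy
    have h3 := hqsupp y hyq
    intro hyT
    exact h3 ⟨hyT, fun h => hxnot (h ▸ hy)⟩
  refine ⟨w, ⟨p'.reverse, ?_⟩, hadj⟩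
  intro y hy
  rw [Walk.support_reverse] at hy
  exact hp'T y (List.mem_reverse.mp hy)

lemma seps_not_self {G : SimpleGraph V} {T : Set V} {a b : V}
    (hsep : Seps G T a b) : b ∉ AComp G T a := by
  rintro ⟨p, hp⟩
  obtain ⟨x, hxs, hxT⟩ := hsep p
  exact hp x hxs hxT

lemma isMinSep_of_min {G : SimpleGraph V} {T : Set V} {a b : V} (ha : a ∉ T) (hb : b ∉ T)
    (hsep : Seps G T a b) (hmin : ∀ s ∈ T, ¬ Seps G (T \ {s}) a b) :
    IsMinSep G T := by
  have hsep' : Seps G T b a := fun p => by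
    obtain ⟨x, hx, hxT⟩ := hsep p.reverse
    rw [Walk.support_reverse, List.mem_reverse] at hx
    exact ⟨x, hx, hxT⟩
  have hmin' : ∀ s ∈ T, ¬ Seps G (T \ {s}) b a := by
    intro s hs hcon
    refine hmin s hs (fun p => ?_)
    obtain ⟨x, hx, hxT⟩ := hcon p.reverse
    rw [Walk.support_reverse, List.mem_reverse] at hx
    exact ⟨x, hx, hxT⟩
  refine ⟨AComp G T a, AComp G T b, isCompOf_aComp G ha, isCompOf_aComp G hb, ?_,
    aComp_full ha hsep hmin, aComp_full hb hsep' hmin'⟩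
  intro h
  exact seps_not_self hsep (h ▸ aComp_self hb)

lemma exists_min_seps [Fintype V] {G : SimpleGraph V} {S₀ : Set V} {a b : V}
    (hsep : Seps G S₀ a b) :
    ∃ T : Set V, T ⊆ S₀ ∧ Seps G T a b ∧ ∀ s ∈ T, ¬ Seps G (T \ {s}) a b := by
  classical
  set F : Set (Finset V) := {T | ↑T ⊆ S₀ ∧ Seps G ↑T a b} with hF
  have hFne : F.Nonempty := by
    refine ⟨(Set.toFinite S₀).toFinset, ?_, ?_⟩ <;>
      simp only [Set.Finite.coe_toFinset] <;> [exact subset_rfl; exact hsep]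
  obtain ⟨T, hTF, hTm⟩ := Set.exists_min_image F Finset.card (Set.toFinite F) hFne
  refine ⟨↑T, hTF.1, hTF.2, fun s hs hcon => ?_⟩
  have hsT : s ∈ T := by exact_mod_cast hs
  have hmem : T.erase s ∈ F := by
    refine ⟨?_, ?_⟩
    · rw [Finset.coe_erase]
      exact Set.diff_subset.trans hTF.1
    · rwa [Finset.coe_erase]
  have h1 := hTm _ hmem
  have h2 : (T.erase s).card < T.card := Finset.card_erase_lt_of_mem hsT
  omega

lemma exists_nonadj_pair {G : SimpleGraph V} {Ω₁ Ω₂ : Set V}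
    (hΩ₁ : MaxClique G Ω₁) (hΩ₂ : MaxClique G Ω₂) (hne : Ω₁ ≠ Ω₂) :
    ∃ a ∈ Ω₁, ∃ b ∈ Ω₂, a ∉ Ω₂ ∧ b ∉ Ω₁ ∧ ¬ G.Adj a b := by
  by_contra hcon
  push_neg at hcon
  have hcl : G.IsClique (Ω₁ ∪ Ω₂) := by
    intro x hx y hy hxy
    rcases hx with hx1 | hx2 <;> rcases hy with hy1 | hy2
    · exact hΩ₁.1 hx1 hy1 hxy
    · by_cases hx2 : x ∈ Ω₂
      · exact hΩ₂.1 hx2 hy2 hxy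
      · by_cases hy1 : y ∈ Ω₁
        · exact hΩ₁.1 hx1 hy1 hxy
        · exact hcon x hx1 y hy2 hx2 hy1
    · by_cases hx1 : x ∈ Ω₁
      · exact hΩ₁.1 hx1 hy1 hxy
      · by_cases hy2 : y ∈ Ω₂
        · exact hΩ₂.1 hx2 hy2 hxy
        · exact (hcon y hy1 x hx2 hy2 hx1).symm
    · exact hΩ₂.1 hx2 hy2 hxy
  have h1 : Ω₁ ∪ Ω₂ = Ω₁ := hΩ₁.2 _ hcl Set.subset_union_left
  have h2 : Ω₂ ⊆ Ω₁ := h1 ▸ Set.subset_union_right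
  exact hne (hΩ₂.2 Ω₁ hΩ₁.1 h2)

lemma closedNbhd_eq {G : SimpleGraph V} {S D : Set V} (hD : IsCompOf G S D)
    (hfull : FullTo G S D) : closedNbhd G D = D ∪ S := by
  ext v
  constructor
  · rintro (hv | ⟨hvD, d, hd, hadj⟩)
    · exact Or.inl hv
    · by_cases hvS : v ∈ S
      · exact Or.inr hvS
      · exact absurd (hD.2.2.2 d hd v hadj.symm hvS) hvD
  · rintro (hv | hv)
    · exact Or.inl hv
    · obtain ⟨d, hd, hadj⟩ := hfull v hv
      exact Or.inr ⟨fun hvD => (Set.disjoint_left.mp hD.2.1 hvD) hv, d, hd, hadj⟩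

/-- In a chordal graph, if a full component `D` of a minimal separator `S` houses two
distinct maximal cliques `Ω` with `S ⊊ Ω ⊆ N[D]`, then there is a minimal separator `S'`
with `S ⊊ S' ⊆ N[D]`. -/
theorem statement_5 [Fintype V] (G : SimpleGraph V) (hG : IsChordal G)
    (S D : Set V) (hS : IsMinSep G S) (hD : IsCompOf G S D) (hfull : FullTo G S D)
    (Ω₁ Ω₂ : Set V) (hΩ₁ : MaxClique G Ω₁) (hΩ₂ : MaxClique G Ω₂) (hne : Ω₁ ≠ Ω₂)
    (hS₁ : S ⊂ Ω₁) (hS₂ : S ⊂ Ω₂)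
    (hN₁ : Ω₁ ⊆ closedNbhd G D) (hN₂ : Ω₂ ⊆ closedNbhd G D) :
    ∃ S' : Set V, IsMinSep G S' ∧ S ⊂ S' ∧ S' ⊆ closedNbhd G D := by
  classical
  have hND : closedNbhd G D = D ∪ S := closedNbhd_eq hD hfull
  obtain ⟨a, ha1, b, hb2, ha2, hb1, hab⟩ := exists_nonadj_pair hΩ₁ hΩ₂ hne
  have haS : a ∉ S := fun h => ha2 (hS₂.1 h)
  have hbS : b ∉ S := fun h => hb1 (hS₁.1 h)
  have haD : a ∈ D := by
    have h := hN₁ ha1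
    rw [hND] at h
    exact h.resolve_right haS
  have hbD : b ∈ D := by
    have h := hN₂ hb2
    rw [hND] at h
    exact h.resolve_right hbS
  have hneab : a ≠ b := fun h => ha2 (h ▸ hb2)
  set S₀ : Set V := (D ∪ S) \ {a, b} with hS₀
  have haS0 : a ∉ S₀ := fun h => h.2 (Or.inl rfl)
  have hbS0 : b ∉ S₀ := fun h => h.2 (Or.inr rfl)
  have hsep0 : Seps G S₀ a b := by
    intro p
    obtain ⟨x, hadj, p', rfl⟩ := Walk.exists_eq_cons_of_ne hneab p
    refine ⟨x, by simp, ?_, ?_⟩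
    · by_cases hx : x ∈ S
      · exact Or.inr hx
      · exact Or.inl (hD.2.2.2 a haD x hadj hx)
    · rintro (h | h)
      · exact hadj.ne' h
      · exact hab (h ▸ hadj)
  obtain ⟨T, hTsub, hTsep, hTmin⟩ := exists_min_seps hsep0
  have haT : a ∉ T := fun h => haS0 (hTsub h)
  have hbT : b ∉ T := fun h => hbS0 (hTsub h)
  have hST : S ⊆ T := by
    intro s hs
    have has : G.Adj a s := hΩ₁.1 ha1 (hS₁.1 hs) (fun h => haS (h ▸ hs))
    have hsb : G.Adj s b := hΩ₂.1 (hS₂.1 hs) hb2 (fun h => hbS (h ▸ hs))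
    obtain ⟨x, hx, hxT⟩ := hTsep (Walk.cons has (Walk.cons hsb Walk.nil))
    simp only [Walk.support_cons, Walk.support_nil, List.mem_cons,
      List.mem_singleton] at hx
    rcases hx with rfl | rfl | rfl | hx
    · exact absurd hxT haT
    · exact hxT
    · exact absurd hxT hbT
    · exact absurd hx List.not_mem_nil
  have hnotsep : ¬ Seps G S a b := by
    intro hcon
    obtain ⟨p⟩ := hD.2.2.1.preconnected ⟨a, haD⟩ ⟨b, hbD⟩
    obtain ⟨x, hx, hxS⟩ := hcon (p.map (SimpleGraph.Embedding.induce D).toHom)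
    change x ∈ (p.map (SimpleGraph.Embedding.induce D).toHom).support at hx
    rw [Walk.support_map, List.mem_map] at hx
    obtain ⟨y, _, rfl⟩ := hx
    exact Set.disjoint_left.mp hD.2.1 y.2 hxS
  refine ⟨T, isMinSep_of_min haT hbT hTsep hTmin, ⟨hST, fun h => ?_⟩, ?_⟩
  · exact hnotsep (fun p => by
      obtain ⟨x, hx, hxT⟩ := hTsep p
      exact ⟨x, hx, h hxT⟩)
  · refine hTsub.trans ?_
    rw [hND]
    exact Set.diff_subset
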